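/- Let (ρ_b, ρ_g, ι) be an effect-oriented rule and t : G ⟹_{ρ_c, m_c} H an effect-oriented transformation via one of its induced rules ρ_c, with comatch n_c. Let x ∈ L_g \ L_b be an element representing a potential deletion, let K_b^+ be the extension of K_b with x (provided this is defined as a graph, i.e., x is a node, or x is an edge whose endpoints lie in K_b), and let ι^+ : K_b → K_b^+ be the corresponding inclusion. If there exists an injective morphism m^+ : K_b^+ → H with m^+ ∘ ι^+ = n_c ∘ ι_R ∘ r_b, then either (1) (alternative action) the element x belongs to L_c, or (2) (alternative creation) the element m^+(x) of H has a pre-image from R_c under n_c. -/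

import Mathlib

/-! ## Finite graphs and graph morphisms -/

/-- A finite graph: nodes, edges, source and target functions. -/
structure Gra where
  V : Type
  E : Type
  finV : Finite V
  finE : Finite E
  src : E → V
  tar : E → V

attribute [instance] Gra.finV Gra.finE

/-- A graph morphism: commutes with source and target. -/
structure GraHom (G H : Gra) where
  fV : G.V → H.V
  fE : G.E → H.E
  comm_src : ∀ e, H.src (fE e) = fV (G.src e)
  comm_tar : ∀ e, H.tar (fE e) = fV (G.tar e)

def GraHom.id (G : Gra) : GraHom G G :=
  ⟨fun v => v, fun e => e, fun _ => rfl, fun _ => rfl⟩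

def GraHom.comp {G H K : Gra} (g : GraHom H K) (f : GraHom G H) : GraHom G K where
  fV := g.fV ∘ f.fV
  fE := g.fE ∘ f.fE
  comm_src e := by simp only [Function.comp_apply, g.comm_src, f.comm_src]
  comm_tar e := by simp only [Function.comp_apply, g.comm_tar, f.comm_tar]

/-! ## Typed graphs over a fixed type graph -/

/-- A typed graph over the type graph `TG`. -/
structure TGraph (TG : Gra) where
  gr : Gra
  typ : GraHom gr TG

/-- A typed graph morphism. -/
structure THom {TG : Gra} (A B : TGraph TG) extends GraHom A.gr B.gr where
  typV : ∀ v, B.typ.fV (toGraHom.fV v) = A.typ.fV v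
  typE : ∀ e, B.typ.fE (toGraHom.fE e) = A.typ.fE e

def THom.id {TG : Gra} (A : TGraph TG) : THom A A :=
  ⟨GraHom.id A.gr, fun _ => rfl, fun _ => rfl⟩

def THom.comp {TG : Gra} {A B C : TGraph TG} (g : THom B C) (f : THom A B) : THom A C :=
  ⟨g.toGraHom.comp f.toGraHom,
   fun v => (g.typV (f.toGraHom.fV v)).trans (f.typV v),
   fun e => (g.typE (f.toGraHom.fE e)).trans (f.typE e)⟩

def THom.Injective {TG : Gra} {A B : TGraph TG} (f : THom A B) : Prop :=
  Function.Injective f.fV ∧ Function.Injective f.fE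

def THom.Bijective {TG : Gra} {A B : TGraph TG} (f : THom A B) : Prop :=
  Function.Bijective f.fV ∧ Function.Bijective f.fE

/-- The action of a typed morphism on elements (nodes and edges). -/
def THom.elem {TG : Gra} {A B : TGraph TG} (f : THom A B) :
    A.gr.V ⊕ A.gr.E → B.gr.V ⊕ B.gr.E :=
  Sum.map f.fV f.fE

/-! ## Pullback and pushout squares of typed graphs -/

/-- The square `f ∘ pa = g ∘ pb` (with apex `P`) is a pullback. -/
def IsPB {TG : Gra} {P A B C : TGraph TG} (pa : THom P A) (pb : THom P B)
    (f : THom A C) (g : THom B C) : Prop :=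
  f.comp pa = g.comp pb ∧
  ∀ (X : TGraph TG) (qa : THom X A) (qb : THom X B), f.comp qa = g.comp qb →
    ∃! h : THom X P, pa.comp h = qa ∧ pb.comp h = qb

/-- The square `ia ∘ f = ib ∘ g` (with corner object the codomain of `ia`/`ib`)
is a pushout. -/
def IsPO {TG : Gra} {P A B C : TGraph TG} (f : THom P A) (g : THom P B)
    (ia : THom A C) (ib : THom B C) : Prop :=
  ia.comp f = ib.comp g ∧
  ∀ (X : TGraph TG) (qa : THom A X) (qb : THom B X), qa.comp f = qb.comp g →
    ∃! h : THom C X, h.comp ia = qa ∧ h.comp ib = qb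

/-! ## Application conditions, rules -/

/-- An application condition over `L`, given semantically: a predicate on
morphisms with domain `L`. -/
def AppCond {TG : Gra} (L : TGraph TG) : Type 1 :=
  ∀ X : TGraph TG, THom L X → Prop

/-- Shift of an application condition along a morphism, characterized
semantically: `m ⊨ Shift(b, ac)` iff `m ∘ b ⊨ ac`. -/
def Shift {TG : Gra} {L L' : TGraph TG} (b : THom L L') (ac : AppCond L) :
    AppCond L' :=
  fun X m => ac X (m.comp b)

/-- Semantic equivalence of application conditions (on injective morphisms). -/
def CondEquiv {TG : Gra} {L : TGraph TG} (ac₁ ac₂ : AppCond L) : Prop :=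
  ∀ (X : TGraph TG) (m : THom L X), m.Injective → (ac₁ X m ↔ ac₂ X m)

/-- A rule: a span of injective typed morphisms together with an application
condition over the left-hand side. -/
structure Rule (TG : Gra) where
  L : TGraph TG
  K : TGraph TG
  R : TGraph TG
  l : THom K L
  r : THom K R
  l_inj : l.Injective
  r_inj : r.Injective
  ac : AppCond L

/-- The dangling condition for a pre-match `m` of a rule: no node of `L \ K` is
mapped to a node of `G` incident to an edge outside `m(E_L)`. -/
def Dangling {TG : Gra} (ρr : Rule TG) {G : TGraph TG} (m : THom ρr.L G) : Prop :=
  ∀ v : ρr.L.gr.V, (∀ k : ρr.K.gr.V, ρr.l.fV k ≠ v) →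
    ∀ e : G.gr.E, (G.gr.src e = m.fV v ∨ G.gr.tar e = m.fV v) →
      ∃ e' : ρr.L.gr.E, m.fE e' = e

/-- A match for a rule: an injective morphism satisfying the application
condition at which the rule is applicable (dangling condition). -/
def IsMatch {TG : Gra} (ρr : Rule TG) {G : TGraph TG} (m : THom ρr.L G) : Prop :=
  m.Injective ∧ ρr.ac G m ∧ Dangling ρr m

/-- Isomorphism of rules. -/
def RuleIso {TG : Gra} (ρ₁ ρ₂ : Rule TG) : Prop :=
  ∃ (fL : THom ρ₁.L ρ₂.L) (fK : THom ρ₁.K ρ₂.K) (fR : THom ρ₁.R ρ₂.R),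
    fL.Bijective ∧ fK.Bijective ∧ fR.Bijective ∧
    fL.comp ρ₁.l = ρ₂.l.comp fK ∧ fR.comp ρ₁.r = ρ₂.r.comp fK ∧
    CondEquiv ρ₂.ac (Shift fL ρ₁.ac)

/-! ## Effect-oriented rules -/

/-- An effect-oriented rule: a maximal rule
`ρ_g = (L_g ←l_g– K –r_g→ R_g, ac_g)` together with a base rule
`ρ_b = (L_b ←l_b– K –r_b→ R_b, ac_b)` that is a subrule of it via
`(ι_L, id, ι_R)` (the interfaces coincide, `ι_K` is the identity). -/
structure EORule (TG : Gra) where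
  K : TGraph TG
  Lb : TGraph TG
  Rb : TGraph TG
  Lg : TGraph TG
  Rg : TGraph TG
  lb : THom K Lb
  rb : THom K Rb
  lg : THom K Lg
  rg : THom K Rg
  ιL : THom Lb Lg
  ιR : THom Rb Rg
  lb_inj : lb.Injective
  rb_inj : rb.Injective
  lg_inj : lg.Injective
  rg_inj : rg.Injective
  ιL_inj : ιL.Injective
  ιR_inj : ιR.Injective
  commL : ιL.comp lb = lg
  commR : ιR.comp rb = rg
  pbL : IsPB lb (THom.id K) ιL lg
  pbR : IsPB rb (THom.id K) ιR rg
  acb : AppCond Lb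
  acg : AppCond Lg
  ac_equiv : CondEquiv acg (Shift ιL acb)

/-- An induced rule of an effect-oriented rule, given by a factorisation
`ι_L = ι_L^{m′} ∘ ι_L^{i′}` through `L_i′`, a factorisation
`r_g = r_c ∘ ι_K^{m}` through `K_c` whose square with `(r_b, ι_R)` is a
pullback, and a pushout `(L_c, u, l_c)` of `k_1 = ι_L^{i′} ∘ l_b` and
`ι_K^{m}`; the right-hand side is `R_g`. -/
structure InducedRule {TG : Gra} (ρ : EORule TG) where
  Li : TGraph TG
  ιLi : THom ρ.Lb Li
  ιLm : THom Li ρ.Lg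
  ιLi_inj : ιLi.Injective
  ιLm_inj : ιLm.Injective
  factL : ιLm.comp ιLi = ρ.ιL
  Kc : TGraph TG
  ιKm : THom ρ.K Kc
  rc : THom Kc ρ.Rg
  ιKm_inj : ιKm.Injective
  rc_inj : rc.Injective
  factR : rc.comp ιKm = ρ.rg
  pbRc : IsPB ρ.rb ιKm ρ.ιR rc
  Lc : TGraph TG
  u : THom Li Lc
  lc : THom Kc Lc
  u_inj : u.Injective
  lc_inj : lc.Injective
  po : IsPO (ιLi.comp ρ.lb) ιKm u lc

namespace InducedRule

variable {TG : Gra} {ρ : EORule TG}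

/-- `k_1 = ι_L^{i′} ∘ l_b`. -/
def k1 (c : InducedRule ρ) : THom ρ.K c.Li := c.ιLi.comp ρ.lb

/-- `ι_L^c = u ∘ ι_L^{i′}`, the embedding of `L_b` into `L_c`. -/
def ιLc (c : InducedRule ρ) : THom ρ.Lb c.Lc := c.u.comp c.ιLi

/-- The application condition of the induced rule: `ac_c = Shift(ι_L^c, ac_b)`. -/
def acc (c : InducedRule ρ) : AppCond c.Lc := Shift c.ιLc ρ.acb

/-- The induced rule as a rule `(L_c ←l_c– K_c –r_c→ R_g, ac_c)`. -/
def rule (c : InducedRule ρ) : Rule TG where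
  L := c.Lc
  K := c.Kc
  R := ρ.Rg
  l := c.lc
  r := c.rc
  l_inj := c.lc_inj
  r_inj := c.rc_inj
  ac := c.acc

/-- The size of an induced rule: `|L_i′ \ L_b| + |K_c \ K_b|`
(counting nodes and edges). -/
noncomputable def size (c : InducedRule ρ) : ℕ :=
  Nat.card {x : c.Li.gr.V ⊕ c.Li.gr.E // x ∉ Set.range c.ιLi.elem} +
  Nat.card {x : c.Kc.gr.V ⊕ c.Kc.gr.E // x ∉ Set.range c.ιKm.elem}

end InducedRule

/-! ## Double-pushout transformations -/

/-- A double-pushout (DPO) transformation `G ⟹_{ρr,m} H`. -/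
structure DPOTrafo {TG : Gra} (ρr : Rule TG) (G H : TGraph TG) where
  m : THom ρr.L G
  m_inj : m.Injective
  m_ac : ρr.ac G m
  D : TGraph TG
  d : THom ρr.K D
  g : THom D G
  h : THom D H
  n : THom ρr.R H
  po1 : IsPO ρr.l d m g
  po2 : IsPO ρr.r d n h

/-! ## Locally complete matches -/

/-- A match `m_c` for an induced rule, compatible with the pre-match
`m_b = m_c ∘ ι_L^c` for the base rule, is locally complete w.r.t. `m_b`:
no strictly larger factorisation (on the deletion or the creation side)
admits a compatible injective extension that induces an injective morphism
on the corresponding pushout object. -/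
def LocallyComplete {TG : Gra} {ρ : EORule TG} (c : InducedRule ρ)
    {G : TGraph TG} (mc : THom c.Lc G) : Prop :=
  (∀ (Li'' : TGraph TG) (iLi'' : THom ρ.Lb Li'') (iLm'' : THom Li'' ρ.Lg)
      (j : THom c.Li Li''),
      iLi''.Injective → iLm''.Injective → iLm''.comp iLi'' = ρ.ιL →
      j.Injective → ¬ j.Bijective → j.comp c.ιLi = iLi'' → iLm''.comp j = c.ιLm →
      ∀ e1' : THom Li'' G, e1'.Injective → e1'.comp iLi'' = mc.comp c.ιLc →
      ∀ (Lc'' : TGraph TG) (u'' : THom Li'' Lc'') (lc'' : THom c.Kc Lc''),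
        IsPO (iLi''.comp ρ.lb) c.ιKm u'' lc'' →
      ∀ w : THom Lc'' G, w.comp u'' = e1' → w.comp lc'' = mc.comp c.lc →
        ¬ w.Injective) ∧
  (∀ (Kc' : TGraph TG) (iKm' : THom ρ.K Kc') (rc' : THom Kc' ρ.Rg)
      (j : THom c.Kc Kc'),
      iKm'.Injective → rc'.Injective → rc'.comp iKm' = ρ.rg →
      j.Injective → ¬ j.Bijective → j.comp c.ιKm = iKm' → rc'.comp j = c.rc →
      ∀ e2' : THom Kc' G, e2'.Injective → e2'.comp iKm' = (mc.comp c.ιLc).comp ρ.lb →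
      ∀ (Lc'' : TGraph TG) (u'' : THom c.Li Lc'') (lc'' : THom Kc' Lc''),
        IsPO (c.ιLi.comp ρ.lb) iKm' u'' lc'' →
      ∀ w : THom Lc'' G, w.comp u'' = mc.comp c.u → w.comp lc'' = e2' →
        ¬ w.Injective)
/-! ## Infrastructure -/

section Infra

open Classical

variable {TG : Gra}

theorem GraHom.ext' {G H : Gra} {f g : GraHom G H} (hV : f.fV = g.fV)
    (hE : f.fE = g.fE) : f = g := by
  cases f; cases g; cases hV; cases hE; rfl

theorem THom.ext' {A B : TGraph TG} {f g : THom A B} (hV : f.fV = g.fV)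
    (hE : f.fE = g.fE) : f = g := by
  cases f; cases g; cases (GraHom.ext' hV hE); rfl

@[simp] theorem THom.comp_fV {A B C : TGraph TG} (g : THom B C) (f : THom A B) (v) :
    (g.comp f).fV v = g.fV (f.fV v) := rfl

@[simp] theorem THom.comp_fE {A B C : TGraph TG} (g : THom B C) (f : THom A B) (e) :
    (g.comp f).fE e = g.fE (f.fE e) := rfl

@[simp] theorem THom.elem_inl {A B : TGraph TG} (f : THom A B) (v) :
    f.elem (Sum.inl v) = Sum.inl (f.fV v) := rfl

@[simp] theorem THom.elem_inr {A B : TGraph TG} (f : THom A B) (e) :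
    f.elem (Sum.inr e) = Sum.inr (f.fE e) := rfl

theorem THom.elem_comp {A B C : TGraph TG} (g : THom B C) (f : THom A B) (s) :
    (g.comp f).elem s = g.elem (f.elem s) := by cases s <;> rfl

theorem THom.congr_fV {A B : TGraph TG} {f g : THom A B} (h : f = g) (v) :
    f.fV v = g.fV v := by rw [h]

theorem THom.congr_fE {A B : TGraph TG} {f g : THom A B} (h : f = g) (e) :
    f.fE e = g.fE e := by rw [h]

theorem THom.congr_elem {A B : TGraph TG} {f g : THom A B} (h : f = g) (s) :
    f.elem s = g.elem s := by rw [h]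

theorem THom.inj_elem {A B : TGraph TG} {f : THom A B} :
    f.Injective ↔ Function.Injective f.elem := by
  constructor
  · rintro ⟨hV, hE⟩ (a | a) (b | b) h <;> simp only [THom.elem_inl, THom.elem_inr] at h
    · rw [hV (Sum.inl.inj h)]
    · exact absurd h (by simp)
    · exact absurd h (by simp)
    · rw [hE (Sum.inr.inj h)]
  · intro h
    constructor
    · intro a b hab
      have : f.elem (Sum.inl a) = f.elem (Sum.inl b) := by simpa using hab
      simpa using h this
    · intro a b hab
      have : f.elem (Sum.inr a) = f.elem (Sum.inr b) := by simpa using hab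
      simpa using h this

theorem THom.comp_assoc {A B C D : TGraph TG} (h : THom C D) (g : THom B C) (f : THom A B) :
    (h.comp g).comp f = h.comp (g.comp f) := THom.ext' rfl rfl

theorem THom.id_comp {A B : TGraph TG} (f : THom A B) : (THom.id B).comp f = f :=
  THom.ext' rfl rfl

theorem THom.comp_id {A B : TGraph TG} (f : THom A B) : f.comp (THom.id A) = f :=
  THom.ext' rfl rfl

theorem THom.Injective.comp {A B C : TGraph TG} {g : THom B C} {f : THom A B}
    (hg : g.Injective) (hf : f.Injective) : (g.comp f).Injective :=
  ⟨hg.1.comp hf.1, hg.2.comp hf.2⟩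

theorem THom.inj_of_comp {A B C : TGraph TG} {g : THom B C} {f : THom A B}
    (h : (g.comp f).Injective) : f.Injective :=
  ⟨fun a b hab => h.1 (by simp [hab]), fun a b hab => h.2 (by simp [hab])⟩

theorem THom.elem_inl_mem {A B : TGraph TG} {f : THom A B} {v}
    (h : Sum.inl v ∈ Set.range f.elem) : ∃ b, f.fV b = v := by
  obtain ⟨b | b, hb⟩ := h
  · exact ⟨b, Sum.inl.inj hb⟩
  · exact absurd hb (by simp)

theorem THom.elem_inr_mem {A B : TGraph TG} {f : THom A B} {e}
    (h : Sum.inr e ∈ Set.range f.elem) : ∃ b, f.fE b = e := by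
  obtain ⟨b | b, hb⟩ := h
  · exact absurd hb (by simp)
  · exact ⟨b, Sum.inr.inj hb⟩

/-! ### Subgraphs -/

/-- The subgraph of `B` determined by a set `S` of elements closed under
source and target. -/
def SubG (B : TGraph TG) (S : Set (B.gr.V ⊕ B.gr.E))
    (hcl : ∀ e, Sum.inr e ∈ S → Sum.inl (B.gr.src e) ∈ S ∧ Sum.inl (B.gr.tar e) ∈ S) :
    TGraph TG where
  gr :=
    { V := {v // Sum.inl v ∈ S}
      E := {e // Sum.inr e ∈ S}
      finV := Subtype.finite
      finE := Subtype.finite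
      src := fun e => ⟨B.gr.src e.1, (hcl e.1 e.2).1⟩
      tar := fun e => ⟨B.gr.tar e.1, (hcl e.1 e.2).2⟩ }
  typ :=
    { fV := fun v => B.typ.fV v.1
      fE := fun e => B.typ.fE e.1
      comm_src := fun e => B.typ.comm_src e.1
      comm_tar := fun e => B.typ.comm_tar e.1 }

/-- The inclusion of a subgraph. -/
def SubG.incl (B : TGraph TG) (S : Set (B.gr.V ⊕ B.gr.E)) (hcl) :
    THom (SubG B S hcl) B :=
  ⟨⟨Subtype.val, Subtype.val, fun _ => rfl, fun _ => rfl⟩, fun _ => rfl, fun _ => rfl⟩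

theorem SubG.incl_inj (B : TGraph TG) (S : Set (B.gr.V ⊕ B.gr.E)) (hcl) :
    (SubG.incl B S hcl).Injective :=
  ⟨fun _ _ h => Subtype.ext h, fun _ _ h => Subtype.ext h⟩

end Infra
/-! ### A concrete pushout construction -/

namespace CPO

open Classical

variable {TG : Gra} {P A B : TGraph TG} (f : THom P A) (g : THom P B)

/-- Node component of the second pushout injection. -/
noncomputable def qbV : B.gr.V → A.gr.V ⊕ {b : B.gr.V // b ∉ Set.range g.fV} :=
  fun b =>
    if h : ∃ p, g.fV p = b then Sum.inl (f.fV h.choose)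
    else Sum.inr ⟨b, fun ⟨p, hp⟩ => h ⟨p, hp⟩⟩

/-- Edge component of the second pushout injection. -/
noncomputable def qbE : B.gr.E → A.gr.E ⊕ {e : B.gr.E // e ∉ Set.range g.fE} :=
  fun e =>
    if h : ∃ p, g.fE p = e then Sum.inl (f.fE h.choose)
    else Sum.inr ⟨e, fun ⟨p, hp⟩ => h ⟨p, hp⟩⟩

theorem qbV_g (hg : Function.Injective g.fV) (p) :
    qbV f g (g.fV p) = Sum.inl (f.fV p) := by
  have h : ∃ q, g.fV q = g.fV p := ⟨p, rfl⟩
  rw [qbV, dif_pos h, hg h.choose_spec]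

theorem qbE_g (hg : Function.Injective g.fE) (p) :
    qbE f g (g.fE p) = Sum.inl (f.fE p) := by
  have h : ∃ q, g.fE q = g.fE p := ⟨p, rfl⟩
  rw [qbE, dif_pos h, hg h.choose_spec]

theorem qbV_not {b} (hb : b ∉ Set.range g.fV) : qbV f g b = Sum.inr ⟨b, hb⟩ := by
  rw [qbV, dif_neg (fun ⟨p, hp⟩ => hb ⟨p, hp⟩)]

theorem qbE_not {e} (he : e ∉ Set.range g.fE) : qbE f g e = Sum.inr ⟨e, he⟩ := by
  rw [qbE, dif_neg (fun ⟨p, hp⟩ => he ⟨p, hp⟩)]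

theorem qbV_typ (b) :
    Sum.elim A.typ.fV (fun v : {v // v ∉ Set.range g.fV} => B.typ.fV v.1) (qbV f g b) =
      B.typ.fV b := by
  rw [qbV]
  split
  · next h =>
    simp only [Sum.elim_inl]
    rw [f.typV, ← g.typV, h.choose_spec]
  · rfl

theorem qbE_typ (e) :
    Sum.elim A.typ.fE (fun e' : {e' // e' ∉ Set.range g.fE} => B.typ.fE e'.1) (qbE f g e) =
      B.typ.fE e := by
  rw [qbE]
  split
  · next h =>
    simp only [Sum.elim_inl]
    rw [f.typE, ← g.typE, h.choose_spec]
  · rfl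

/-- The pushout object. -/
noncomputable def C : TGraph TG where
  gr :=
    { V := A.gr.V ⊕ {b : B.gr.V // b ∉ Set.range g.fV}
      E := A.gr.E ⊕ {e : B.gr.E // e ∉ Set.range g.fE}
      finV := Finite.instSum
      finE := Finite.instSum
      src := Sum.elim (fun e => Sum.inl (A.gr.src e)) (fun e => qbV f g (B.gr.src e.1))
      tar := Sum.elim (fun e => Sum.inl (A.gr.tar e)) (fun e => qbV f g (B.gr.tar e.1)) }
  typ :=
    { fV := Sum.elim A.typ.fV (fun v => B.typ.fV v.1)
      fE := Sum.elim A.typ.fE (fun e => B.typ.fE e.1)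
      comm_src := by
        rintro (e | e)
        · exact A.typ.comm_src e
        · show TG.src (B.typ.fE e.1) = _
          rw [B.typ.comm_src e.1]
          exact (qbV_typ f g (B.gr.src e.1)).symm
      comm_tar := by
        rintro (e | e)
        · exact A.typ.comm_tar e
        · show TG.tar (B.typ.fE e.1) = _
          rw [B.typ.comm_tar e.1]
          exact (qbV_typ f g (B.gr.tar e.1)).symm }

/-- First pushout injection. -/
def qa : THom A (C f g) :=
  ⟨⟨Sum.inl, Sum.inl, fun _ => rfl, fun _ => rfl⟩, fun _ => rfl, fun _ => rfl⟩

/-- Second pushout injection. -/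
noncomputable def qb (hg : g.Injective) : THom B (C f g) where
  fV := qbV f g
  fE := qbE f g
  comm_src e := by
    show Sum.elim _ _ (qbE f g e) = qbV f g (B.gr.src e)
    rw [qbE]
    split
    · next h =>
      simp only [Sum.elim_inl]
      show Sum.inl (A.gr.src (f.fE h.choose)) = _
      have key : g.fV (P.gr.src h.choose) = B.gr.src e := by
        rw [← g.comm_src, h.choose_spec]
      rw [f.comm_src, ← key, qbV_g f g hg.1]
    · rfl
  comm_tar e := by
    show Sum.elim _ _ (qbE f g e) = qbV f g (B.gr.tar e)
    rw [qbE]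
    split
    · next h =>
      simp only [Sum.elim_inl]
      show Sum.inl (A.gr.tar (f.fE h.choose)) = _
      have key : g.fV (P.gr.tar h.choose) = B.gr.tar e := by
        rw [← g.comm_tar, h.choose_spec]
      rw [f.comm_tar, ← key, qbV_g f g hg.1]
    · rfl
  typV v := qbV_typ f g v
  typE e := qbE_typ f g e

theorem comm (hg : g.Injective) : (qa f g).comp f = (qb f g hg).comp g :=
  THom.ext' (funext fun p => (qbV_g f g hg.1 p).symm) (funext fun p => (qbE_g f g hg.2 p).symm)

section UP

variable {X : TGraph TG} (ta : THom A X) (tb : THom B X)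

theorem elimV_qbV (hc : ta.comp f = tb.comp g) (b) :
    Sum.elim ta.fV (fun v : {v // v ∉ Set.range g.fV} => tb.fV v.1) (qbV f g b) =
      tb.fV b := by
  rw [qbV]
  split
  · next h =>
    show ta.fV (f.fV h.choose) = tb.fV b
    have h1 : ta.fV (f.fV h.choose) = tb.fV (g.fV h.choose) := THom.congr_fV hc h.choose
    rw [h1, h.choose_spec]
  · rfl

theorem elimE_qbE (hc : ta.comp f = tb.comp g) (e) :
    Sum.elim ta.fE (fun e' : {e' // e' ∉ Set.range g.fE} => tb.fE e'.1) (qbE f g e) =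
      tb.fE e := by
  rw [qbE]
  split
  · next h =>
    show ta.fE (f.fE h.choose) = tb.fE e
    have h1 : ta.fE (f.fE h.choose) = tb.fE (g.fE h.choose) := THom.congr_fE hc h.choose
    rw [h1, h.choose_spec]
  · rfl

/-- The mediating morphism out of the pushout. -/
def med (hc : ta.comp f = tb.comp g) : THom (C f g) X where
  fV := Sum.elim ta.fV (fun b => tb.fV b.1)
  fE := Sum.elim ta.fE (fun e => tb.fE e.1)
  comm_src := by
    rintro (e | e)
    · exact ta.comm_src e
    · show X.gr.src (tb.fE e.1) = Sum.elim _ _ (qbV f g (B.gr.src e.1))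
      rw [tb.comm_src, elimV_qbV f g ta tb hc]
  comm_tar := by
    rintro (e | e)
    · exact ta.comm_tar e
    · show X.gr.tar (tb.fE e.1) = Sum.elim _ _ (qbV f g (B.gr.tar e.1))
      rw [tb.comm_tar, elimV_qbV f g ta tb hc]
  typV := by
    rintro (v | v)
    · exact ta.typV v
    · exact tb.typV v.1
  typE := by
    rintro (e | e)
    · exact ta.typE e
    · exact tb.typE e.1

theorem med_qbV (hc : ta.comp f = tb.comp g) (b) :
    (med f g ta tb hc).fV (qbV f g b) = tb.fV b := elimV_qbV f g ta tb hc b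

theorem med_qbE (hc : ta.comp f = tb.comp g) (e) :
    (med f g ta tb hc).fE (qbE f g e) = tb.fE e := elimE_qbE f g ta tb hc e

end UP

theorem isPO (hg : g.Injective) : IsPO f g (qa f g) (qb f g hg) := by
  refine ⟨comm f g hg, fun X ta tb hc => ⟨med f g ta tb hc, ⟨THom.ext' rfl rfl, ?_⟩, ?_⟩⟩
  · exact THom.ext' (funext fun b => med_qbV f g ta tb hc b)
      (funext fun e => med_qbE f g ta tb hc e)
  · rintro w ⟨hw1, hw2⟩
    refine THom.ext' (funext ?_) (funext ?_)
    · rintro (a | b)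
      · exact THom.congr_fV hw1 a
      · have : (Sum.inr b : A.gr.V ⊕ _) = qbV f g b.1 := (qbV_not f g b.2).symm
        show w.fV (Sum.inr b) = _
        rw [this, med_qbV f g ta tb hc]
        exact THom.congr_fV hw2 b.1
    · rintro (a | e)
      · exact THom.congr_fE hw1 a
      · have : (Sum.inr e : A.gr.E ⊕ _) = qbE f g e.1 := (qbE_not f g e.2).symm
        show w.fE (Sum.inr e) = _
        rw [this, med_qbE f g ta tb hc]
        exact THom.congr_fE hw2 e.1

theorem cover (hg : g.Injective) (s : (C f g).gr.V ⊕ (C f g).gr.E) :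
    s ∈ Set.range (qa f g).elem ∨ s ∈ Set.range (qb f g hg).elem := by
  rcases s with (a | b) | (a | e)
  · exact Or.inl ⟨Sum.inl a, rfl⟩
  · refine Or.inr ⟨Sum.inl b.1, ?_⟩
    show Sum.inl (qbV f g b.1) = _
    rw [qbV_not f g b.2]
    rfl
  · exact Or.inl ⟨Sum.inr a, rfl⟩
  · refine Or.inr ⟨Sum.inr e.1, ?_⟩
    show Sum.inr (qbE f g e.1) = _
    rw [qbE_not f g e.2]
    rfl

theorem qb_inj (hf : f.Injective) (hg : g.Injective) : (qb f g hg).Injective := by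
  constructor
  · intro b b' h
    have h2 : qbV f g b = qbV f g b' := h
    by_cases hb : ∃ p, g.fV p = b <;> by_cases hb' : ∃ p, g.fV p = b'
    · obtain ⟨p, hp⟩ := hb; obtain ⟨p', hp'⟩ := hb'
      rw [← hp, ← hp', qbV_g f g hg.1, qbV_g f g hg.1] at h2
      rw [← hp, ← hp']
      exact congrArg g.fV (hf.1 (Sum.inl.inj h2))
    · rw [qbV_not f g (fun ⟨p, hp⟩ => hb' ⟨p, hp⟩)] at h2
      obtain ⟨p, hp⟩ := hb
      rw [← hp, qbV_g f g hg.1] at h2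
      exact absurd h2 (by simp)
    · rw [qbV_not f g (fun ⟨p, hp⟩ => hb ⟨p, hp⟩)] at h2
      obtain ⟨p, hp⟩ := hb'
      rw [← hp, qbV_g f g hg.1] at h2
      exact absurd h2 (by simp)
    · rw [qbV_not f g (fun ⟨p, hp⟩ => hb ⟨p, hp⟩),
        qbV_not f g (fun ⟨p, hp⟩ => hb' ⟨p, hp⟩)] at h2
      exact congrArg Subtype.val (Sum.inr.inj h2)
  · intro b b' h
    have h2 : qbE f g b = qbE f g b' := h
    by_cases hb : ∃ p, g.fE p = b <;> by_cases hb' : ∃ p, g.fE p = b'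
    · obtain ⟨p, hp⟩ := hb; obtain ⟨p', hp'⟩ := hb'
      rw [← hp, ← hp', qbE_g f g hg.2, qbE_g f g hg.2] at h2
      rw [← hp, ← hp']
      exact congrArg g.fE (hf.2 (Sum.inl.inj h2))
    · rw [qbE_not f g (fun ⟨p, hp⟩ => hb' ⟨p, hp⟩)] at h2
      obtain ⟨p, hp⟩ := hb
      rw [← hp, qbE_g f g hg.2] at h2
      exact absurd h2 (by simp)
    · rw [qbE_not f g (fun ⟨p, hp⟩ => hb ⟨p, hp⟩)] at h2
      obtain ⟨p, hp⟩ := hb'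
      rw [← hp, qbE_g f g hg.2] at h2
      exact absurd h2 (by simp)
    · rw [qbE_not f g (fun ⟨p, hp⟩ => hb ⟨p, hp⟩),
        qbE_not f g (fun ⟨p, hp⟩ => hb' ⟨p, hp⟩)] at h2
      exact congrArg Subtype.val (Sum.inr.inj h2)

theorem pb (hg : g.Injective) (a) (b) (h : (qa f g).elem a = (qb f g hg).elem b) :
    ∃ p, a = f.elem p ∧ b = g.elem p := by
  rcases a with a | a <;> rcases b with b | b
  · have h2 : (Sum.inl a : A.gr.V ⊕ {v : B.gr.V // v ∉ Set.range g.fV}) = qbV f g b :=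
      Sum.inl.inj h
    by_cases hb : ∃ p, g.fV p = b
    · obtain ⟨p, hp⟩ := hb
      rw [← hp, qbV_g f g hg.1] at h2
      exact ⟨Sum.inl p, by rw [THom.elem_inl, Sum.inl.inj h2], by rw [THom.elem_inl, hp]⟩
    · rw [qbV_not f g (fun ⟨p, hp⟩ => hb ⟨p, hp⟩)] at h2
      exact absurd h2 (by simp)
  · have h2 : (Sum.inl (Sum.inl a) : (C f g).gr.V ⊕ (C f g).gr.E) =
        Sum.inr (qbE f g b) := h
    exact absurd h2 (by simp)
  · have h2 : (Sum.inr (Sum.inl a) : (C f g).gr.V ⊕ (C f g).gr.E) =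
        Sum.inl (qbV f g b) := h
    exact absurd h2 (by simp)
  · have h2 : (Sum.inl a : A.gr.E ⊕ {e : B.gr.E // e ∉ Set.range g.fE}) = qbE f g b :=
      Sum.inr.inj h
    by_cases hb : ∃ p, g.fE p = b
    · obtain ⟨p, hp⟩ := hb
      rw [← hp, qbE_g f g hg.2] at h2
      exact ⟨Sum.inr p, by rw [THom.elem_inr, Sum.inl.inj h2], by rw [THom.elem_inr, hp]⟩
    · rw [qbE_not f g (fun ⟨p, hp⟩ => hb ⟨p, hp⟩)] at h2
      exact absurd h2 (by simp)

end CPO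
/-! ### Transfer of element-level facts to abstract pushouts -/

section Transfer

variable {TG : Gra} {P A B C0 : TGraph TG} {f : THom P A} {g : THom P B}
  {ia : THom A C0} {ib : THom B C0}

theorem po_compare (hg : g.Injective) (hpo : IsPO f g ia ib) :
    ∃ φ : THom (CPO.C f g) C0,
      Function.Bijective φ.fV ∧ Function.Bijective φ.fE ∧
      φ.comp (CPO.qa f g) = ia ∧ φ.comp (CPO.qb f g hg) = ib := by
  have cpo := CPO.isPO f g hg
  obtain ⟨φ, ⟨hφ1, hφ2⟩, -⟩ := cpo.2 C0 ia ib hpo.1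
  obtain ⟨ψ, ⟨hψ1, hψ2⟩, -⟩ := hpo.2 (CPO.C f g) (CPO.qa f g) (CPO.qb f g hg) cpo.1
  obtain ⟨idm, -, hidu⟩ := cpo.2 (CPO.C f g) (CPO.qa f g) (CPO.qb f g hg) cpo.1
  have h1 : ψ.comp φ = THom.id (CPO.C f g) := by
    have ha := hidu (ψ.comp φ) ⟨by rw [THom.comp_assoc, hφ1, hψ1],
      by rw [THom.comp_assoc, hφ2, hψ2]⟩
    have hb := hidu (THom.id (CPO.C f g)) ⟨THom.id_comp _, THom.id_comp _⟩
    rw [ha, hb]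
  obtain ⟨idm', -, hidu'⟩ := hpo.2 C0 ia ib hpo.1
  have h2 : φ.comp ψ = THom.id C0 := by
    have ha := hidu' (φ.comp ψ) ⟨by rw [THom.comp_assoc, hψ1, hφ1],
      by rw [THom.comp_assoc, hψ2, hφ2]⟩
    have hb := hidu' (THom.id C0) ⟨THom.id_comp _, THom.id_comp _⟩
    rw [ha, hb]
  refine ⟨φ, ⟨?_, ?_⟩, ⟨?_, ?_⟩, hφ1, hφ2⟩
  · exact fun a b hab => by
      have ha : ψ.fV (φ.fV a) = a := THom.congr_fV h1 a
      have hb : ψ.fV (φ.fV b) = b := THom.congr_fV h1 b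
      rw [← ha, ← hb, hab]
  · exact fun c => ⟨ψ.fV c, THom.congr_fV h2 c⟩
  · exact fun a b hab => by
      have ha : ψ.fE (φ.fE a) = a := THom.congr_fE h1 a
      have hb : ψ.fE (φ.fE b) = b := THom.congr_fE h1 b
      rw [← ha, ← hb, hab]
  · exact fun c => ⟨ψ.fE c, THom.congr_fE h2 c⟩

theorem IsPO.joint_surj (hg : g.Injective) (hpo : IsPO f g ia ib)
    (s : C0.gr.V ⊕ C0.gr.E) :
    s ∈ Set.range ia.elem ∨ s ∈ Set.range ib.elem := by
  obtain ⟨φ, hbV, hbE, hqa, hqb⟩ := po_compare hg hpo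
  have hsurj : Function.Surjective φ.elem := by
    rintro (v | e)
    · obtain ⟨v', hv'⟩ := hbV.2 v
      exact ⟨Sum.inl v', by rw [THom.elem_inl, hv']⟩
    · obtain ⟨e', he'⟩ := hbE.2 e
      exact ⟨Sum.inr e', by rw [THom.elem_inr, he']⟩
  obtain ⟨q, hq⟩ := hsurj s
  rcases CPO.cover f g hg q with ⟨a, ha⟩ | ⟨b, hb⟩
  · refine Or.inl ⟨a, ?_⟩
    rw [← THom.congr_elem hqa a, THom.elem_comp, ha, hq]
  · refine Or.inr ⟨b, ?_⟩
    rw [← THom.congr_elem hqb b, THom.elem_comp, hb, hq]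

theorem IsPO.ib_inj (hf : f.Injective) (hg : g.Injective) (hpo : IsPO f g ia ib) :
    ib.Injective := by
  obtain ⟨φ, hbV, hbE, hqa, hqb⟩ := po_compare hg hpo
  rw [← hqb]
  exact THom.Injective.comp ⟨hbV.1, hbE.1⟩ (CPO.qb_inj f g hf hg)

theorem IsPO.pb_elem (hg : g.Injective) (hpo : IsPO f g ia ib)
    (a) (b) (h : ia.elem a = ib.elem b) :
    ∃ p, a = f.elem p ∧ b = g.elem p := by
  obtain ⟨φ, hbV, hbE, hqa, hqb⟩ := po_compare hg hpo
  have hinj : Function.Injective φ.elem := by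
    rintro (v | v) (w | w) hvw <;> simp only [THom.elem_inl, THom.elem_inr] at hvw
    · rw [hbV.1 (Sum.inl.inj hvw)]
    · exact absurd hvw (by simp)
    · exact absurd hvw (by simp)
    · rw [hbE.1 (Sum.inr.inj hvw)]
  apply CPO.pb f g hg a b
  apply hinj
  rw [← THom.elem_comp, ← THom.elem_comp, hqa, hqb, h]
end Transfer

/-- **Theorem (Characterising effect-oriented transformations, deletion part).**
Let `(ρ_b, ρ_g, ι)` be an effect-oriented rule and `t : G ⟹_{ρ_c,m_c} H` an
effect-oriented transformation via one of its induced rules `ρ_c`, with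
comatch `n_c`. Let `x ∈ L_g \ L_b` be an element representing a potential
deletion, let `K_b^+` be the extension of `K_b` with `x` (a graph extending
`K_b` that embeds into `L_g` over `l_g` with image exactly `l_g(K_b) ∪ {x}`),
and `ι^+ : K_b → K_b^+` the corresponding inclusion. If there exists an
injective morphism `m^+ : K_b^+ → H` with `m^+ ∘ ι^+ = n_c ∘ ι_R ∘ r_b`,
then either (1) the element `x` belongs to `L_c` (i.e. lies in the image of
`L_i′` in `L_g`), or (2) the element `m^+(x)` of `H` has a pre-image from
`R_c` under `n_c`. -/
theorem characterising_eo_transformations_deletion {TG : Gra}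
    (ρ : EORule TG) (c : InducedRule ρ) (G H : TGraph TG)
    (t : DPOTrafo c.rule G H)
    (hlc : LocallyComplete c t.m)
    (x : ρ.Lg.gr.V ⊕ ρ.Lg.gr.E) (hx : x ∉ Set.range ρ.ιL.elem)
    (Kbp : TGraph TG) (iplus : THom ρ.K Kbp) (emb : THom Kbp ρ.Lg)
    (hiplus : iplus.Injective) (hemb : emb.Injective)
    (hcomm : emb.comp iplus = ρ.lg)
    (hrange : Set.range emb.elem = Set.range ρ.lg.elem ∪ {x})
    (mplus : THom Kbp H) (hmplus : mplus.Injective)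
    (hcomm2 : mplus.comp iplus = t.n.comp (ρ.ιR.comp ρ.rb)) :
    x ∈ Set.range c.ιLm.elem ∨
      ∀ x' : Kbp.gr.V ⊕ Kbp.gr.E, emb.elem x' = x →
        mplus.elem x' ∈ Set.range t.n.elem := by
  classical
  by_cases hxm : x ∈ Set.range c.ιLm.elem
  · exact Or.inl hxm
  refine Or.inr fun x' hx' => ?_
  by_contra hnot
  -- dichotomy on x
  have hxdich : (∃ v, x = Sum.inl v) ∨ ∃ e, x = Sum.inr e :=
    Sum.casesOn (motive := fun s => (∃ v, s = Sum.inl v) ∨ ∃ e, s = Sum.inr e) x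
      (fun v => Or.inl ⟨v, rfl⟩) (fun e => Or.inr ⟨e, rfl⟩)
  -- basic injectivity facts
  have hd_inj : t.d.Injective := by
    apply THom.inj_of_comp (g := t.g)
    rw [← t.po1.1]
    exact THom.Injective.comp t.m_inj c.lc_inj
  have hh_inj : t.h.Injective := IsPO.ib_inj c.rc_inj hd_inj t.po2
  -- decomposition of l_g
  have hlg : ∀ k, ρ.lg.fV k = c.ιLm.fV (c.ιLi.fV (ρ.lb.fV k)) := by
    intro k
    have h1 : ρ.ιL.fV (ρ.lb.fV k) = ρ.lg.fV k := THom.congr_fV ρ.commL k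
    have h2 : c.ιLm.fV (c.ιLi.fV (ρ.lb.fV k)) = ρ.ιL.fV (ρ.lb.fV k) :=
      THom.congr_fV c.factL (ρ.lb.fV k)
    rw [← h1, ← h2]
  -- the image of x' in H comes from D
  obtain ⟨z, hz⟩ : ∃ z, t.h.elem z = mplus.elem x' := by
    rcases IsPO.joint_surj hd_inj t.po2 (mplus.elem x') with hmem | hmem
    · exact absurd hmem hnot
    · exact hmem
  -- the corresponding element of G is not in the image of the match
  have hym : ∀ s, t.m.elem s ≠ t.g.elem z := by
    intro s hs
    obtain ⟨p, hp1, hp2⟩ := IsPO.pb_elem hd_inj t.po1 s z hs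
    apply hnot
    rw [← hz, hp2]
    refine ⟨c.rule.r.elem p, ?_⟩
    rw [← THom.elem_comp, ← THom.elem_comp, t.po2.1]
  -- preimages of non-x elements of K_b^+ come from K
  have hK : ∀ v0 : Kbp.gr.V, Sum.inl (emb.fV v0) ≠ x →
      ∃ k0 : ρ.K.gr.V, ρ.lg.fV k0 = emb.fV v0 ∧ iplus.fV k0 = v0 := by
    intro v0 hne
    have hmem : Sum.inl (emb.fV v0) ∈ Set.range emb.elem := ⟨Sum.inl v0, rfl⟩
    rw [hrange] at hmem
    rcases hmem with hmem | hmem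
    · obtain ⟨k0, hk0⟩ := THom.elem_inl_mem hmem
      refine ⟨k0, hk0, ?_⟩
      apply hemb.1
      have h1 : emb.fV (iplus.fV k0) = ρ.lg.fV k0 := THom.congr_fV hcomm k0
      rw [h1, hk0]
    · exact absurd hmem hne
  -- characterisation of the image of x when x is a node
  have hyV : ∀ v : ρ.Lg.gr.V, Sum.inl v = x →
      ∃ yv : G.gr.V, Sum.inl yv = t.g.elem z ∧ G.typ.fV yv = ρ.Lg.typ.fV v := by
    intro v hv
    rcases x' with xv | xe
    · rcases z with zv | ze
      · have hz' : t.h.fV zv = mplus.fV xv :=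
          Sum.inl.inj (hz : (Sum.inl (t.h.fV zv) : H.gr.V ⊕ H.gr.E) = Sum.inl (mplus.fV xv))
        refine ⟨t.g.fV zv, rfl, ?_⟩
        have hv' : emb.fV xv = v :=
          Sum.inl.inj ((hx'.trans hv.symm :
            (Sum.inl (emb.fV xv) : ρ.Lg.gr.V ⊕ ρ.Lg.gr.E) = Sum.inl v))
        have h1 : G.typ.fV (t.g.fV zv) = t.D.typ.fV zv := t.g.typV zv
        have h2 : H.typ.fV (t.h.fV zv) = t.D.typ.fV zv := t.h.typV zv
        have h3 : H.typ.fV (mplus.fV xv) = Kbp.typ.fV xv := mplus.typV xv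
        have h4 : ρ.Lg.typ.fV (emb.fV xv) = Kbp.typ.fV xv := emb.typV xv
        rw [h1, ← h2, hz', h3, ← h4, hv']
      · have h0 : (Sum.inr (t.h.fE ze) : H.gr.V ⊕ H.gr.E) = Sum.inl (mplus.fV xv) := hz
        exact absurd h0 (by simp)
    · have h0 : (Sum.inr (emb.fE xe) : ρ.Lg.gr.V ⊕ ρ.Lg.gr.E) = Sum.inl v :=
        hx'.trans hv.symm
      exact absurd h0 (by simp)
  -- characterisation of the image of x when x is an edge
  have hyE : ∀ e : ρ.Lg.gr.E, Sum.inr e = x →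
      ∃ ye : G.gr.E, Sum.inr ye = t.g.elem z ∧ G.typ.fE ye = ρ.Lg.typ.fE e ∧
        (∃ ks, c.ιLm.fV ks = ρ.Lg.gr.src e ∧ G.gr.src ye = t.m.fV (c.u.fV ks)) ∧
        (∃ kt, c.ιLm.fV kt = ρ.Lg.gr.tar e ∧ G.gr.tar ye = t.m.fV (c.u.fV kt)) := by
    intro e he
    rcases x' with xv | xe
    · have h0 : (Sum.inl (emb.fV xv) : ρ.Lg.gr.V ⊕ ρ.Lg.gr.E) = Sum.inr e :=
        hx'.trans he.symm
      exact absurd h0 (by simp)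
    rcases z with zv | ze
    · have h0 : (Sum.inl (t.h.fV zv) : H.gr.V ⊕ H.gr.E) = Sum.inr (mplus.fE xe) := hz
      exact absurd h0 (by simp)
    have hxe : emb.fE xe = e :=
      Sum.inr.inj (hx'.trans he.symm :
        (Sum.inr (emb.fE xe) : ρ.Lg.gr.V ⊕ ρ.Lg.gr.E) = Sum.inr e)
    have hze : t.h.fE ze = mplus.fE xe :=
      Sum.inr.inj (hz : (Sum.inr (t.h.fE ze) : H.gr.V ⊕ H.gr.E) = Sum.inr (mplus.fE xe))
    refine ⟨t.g.fE ze, rfl, ?_, ?_, ?_⟩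
    · have h1 : G.typ.fE (t.g.fE ze) = t.D.typ.fE ze := t.g.typE ze
      have h2 : H.typ.fE (t.h.fE ze) = t.D.typ.fE ze := t.h.typE ze
      have h3 : H.typ.fE (mplus.fE xe) = Kbp.typ.fE xe := mplus.typE xe
      have h4 : ρ.Lg.typ.fE (emb.fE xe) = Kbp.typ.fE xe := emb.typE xe
      rw [h1, ← h2, hze, h3, ← h4, hxe]
    · -- source
      have hne : Sum.inl (emb.fV (Kbp.gr.src xe)) ≠ x := by rw [← he]; simp
      obtain ⟨k0, hk01, hk02⟩ := hK (Kbp.gr.src xe) hne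
      refine ⟨c.ιLi.fV (ρ.lb.fV k0), ?_, ?_⟩
      · rw [← hlg k0, hk01, ← emb.comm_src, hxe]
      · have s1 : G.gr.src (t.g.fE ze) = t.g.fV (t.D.gr.src ze) := t.g.comm_src ze
        have s7 : t.D.gr.src ze = t.d.fV (c.ιKm.fV k0) := by
          apply hh_inj.1
          have s2 : t.h.fV (t.D.gr.src ze) = H.gr.src (t.h.fE ze) := (t.h.comm_src ze).symm
          have s3 : H.gr.src (mplus.fE xe) = mplus.fV (Kbp.gr.src xe) := mplus.comm_src xe
          have s4 : mplus.fV (iplus.fV k0) = t.n.fV (ρ.ιR.fV (ρ.rb.fV k0)) :=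
            THom.congr_fV hcomm2 k0
          have s5 : ρ.ιR.fV (ρ.rb.fV k0) = c.rc.fV (c.ιKm.fV k0) := by
            have a1 : ρ.ιR.fV (ρ.rb.fV k0) = ρ.rg.fV k0 := THom.congr_fV ρ.commR k0
            have a2 : c.rc.fV (c.ιKm.fV k0) = ρ.rg.fV k0 := THom.congr_fV c.factR k0
            rw [a1, a2]
          have s6 : t.n.fV (c.rc.fV (c.ιKm.fV k0)) = t.h.fV (t.d.fV (c.ιKm.fV k0)) :=
            THom.congr_fV t.po2.1 (c.ιKm.fV k0)
          rw [s2, hze, s3, ← hk02, s4, s5, s6]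
        have s8 : t.g.fV (t.d.fV (c.ιKm.fV k0)) = t.m.fV (c.lc.fV (c.ιKm.fV k0)) :=
          (THom.congr_fV t.po1.1 (c.ιKm.fV k0)).symm
        have s9 : c.lc.fV (c.ιKm.fV k0) = c.u.fV (c.ιLi.fV (ρ.lb.fV k0)) :=
          (THom.congr_fV c.po.1 k0).symm
        rw [s1, s7, s8, s9]
    · -- target
      have hne : Sum.inl (emb.fV (Kbp.gr.tar xe)) ≠ x := by rw [← he]; simp
      obtain ⟨k0, hk01, hk02⟩ := hK (Kbp.gr.tar xe) hne
      refine ⟨c.ιLi.fV (ρ.lb.fV k0), ?_, ?_⟩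
      · rw [← hlg k0, hk01, ← emb.comm_tar, hxe]
      · have s1 : G.gr.tar (t.g.fE ze) = t.g.fV (t.D.gr.tar ze) := t.g.comm_tar ze
        have s7 : t.D.gr.tar ze = t.d.fV (c.ιKm.fV k0) := by
          apply hh_inj.1
          have s2 : t.h.fV (t.D.gr.tar ze) = H.gr.tar (t.h.fE ze) := (t.h.comm_tar ze).symm
          have s3 : H.gr.tar (mplus.fE xe) = mplus.fV (Kbp.gr.tar xe) := mplus.comm_tar xe
          have s4 : mplus.fV (iplus.fV k0) = t.n.fV (ρ.ιR.fV (ρ.rb.fV k0)) :=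
            THom.congr_fV hcomm2 k0
          have s5 : ρ.ιR.fV (ρ.rb.fV k0) = c.rc.fV (c.ιKm.fV k0) := by
            have a1 : ρ.ιR.fV (ρ.rb.fV k0) = ρ.rg.fV k0 := THom.congr_fV ρ.commR k0
            have a2 : c.rc.fV (c.ιKm.fV k0) = ρ.rg.fV k0 := THom.congr_fV c.factR k0
            rw [a1, a2]
          have s6 : t.n.fV (c.rc.fV (c.ιKm.fV k0)) = t.h.fV (t.d.fV (c.ιKm.fV k0)) :=
            THom.congr_fV t.po2.1 (c.ιKm.fV k0)
          rw [s2, hze, s3, ← hk02, s4, s5, s6]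
        have s8 : t.g.fV (t.d.fV (c.ιKm.fV k0)) = t.m.fV (c.lc.fV (c.ιKm.fV k0)) :=
          (THom.congr_fV t.po1.1 (c.ιKm.fV k0)).symm
        have s9 : c.lc.fV (c.ιKm.fV k0) = c.u.fV (c.ιLi.fV (ρ.lb.fV k0)) :=
          (THom.congr_fV c.po.1 k0).symm
        rw [s1, s7, s8, s9]
  -- closure of the extended image
  have hcl : ∀ e, Sum.inr e ∈ insert x (Set.range c.ιLm.elem) →
      Sum.inl (ρ.Lg.gr.src e) ∈ insert x (Set.range c.ιLm.elem) ∧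
      Sum.inl (ρ.Lg.gr.tar e) ∈ insert x (Set.range c.ιLm.elem) := by
    intro e he
    rcases Set.mem_insert_iff.mp he with he | he
    · obtain ⟨-, -, ⟨ks, hks, -⟩, ⟨kt, hkt, -⟩⟩ := (hyE e he).choose_spec
      constructor
      · exact Set.mem_insert_iff.mpr (Or.inr ⟨Sum.inl ks, by rw [THom.elem_inl, hks]⟩)
      · exact Set.mem_insert_iff.mpr (Or.inr ⟨Sum.inl kt, by rw [THom.elem_inl, hkt]⟩)
    · obtain ⟨b, hb⟩ := THom.elem_inr_mem he
      constructor
      · refine Set.mem_insert_iff.mpr (Or.inr ⟨Sum.inl (c.Li.gr.src b), ?_⟩)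
        rw [THom.elem_inl, ← hb, c.ιLm.comm_src]
      · refine Set.mem_insert_iff.mpr (Or.inr ⟨Sum.inl (c.Li.gr.tar b), ?_⟩)
        rw [THom.elem_inl, ← hb, c.ιLm.comm_tar]
  have resolveV : ∀ v : ρ.Lg.gr.V, Sum.inl v ∈ insert x (Set.range c.ιLm.elem) →
      ¬(∃ b, c.ιLm.fV b = v) → Sum.inl v = x := by
    intro v hv hb
    rcases Set.mem_insert_iff.mp hv with h | h
    · exact h
    · exact absurd (THom.elem_inl_mem h) hb
  have resolveE : ∀ e : ρ.Lg.gr.E, Sum.inr e ∈ insert x (Set.range c.ιLm.elem) →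
      ¬(∃ b, c.ιLm.fE b = e) → Sum.inr e = x := by
    intro e hv hb
    rcases Set.mem_insert_iff.mp hv with h | h
    · exact h
    · exact absurd (THom.elem_inr_mem h) hb
  -- construct the extended graph Li2 together with j and the extension match e1
  obtain ⟨Li2, incl2, j, e1, hincl2_inj, hj_incl, he1j, he1x, hsx, hcover⟩ :
      ∃ (Li2 : TGraph TG) (incl2 : THom Li2 ρ.Lg) (j : THom c.Li Li2) (e1 : THom Li2 G),
        incl2.Injective ∧ incl2.comp j = c.ιLm ∧ e1.comp j = t.m.comp c.u ∧
        (∀ s, incl2.elem s = x → e1.elem s = t.g.elem z) ∧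
        (∃ s0, incl2.elem s0 = x) ∧
        (∀ s, (∃ b, j.elem b = s) ∨ incl2.elem s = x) := by
    obtain ⟨fV0, hfV0pos, hfV0neg⟩ :
        ∃ fV0 : ∀ v : ρ.Lg.gr.V, Sum.inl v ∈ insert x (Set.range c.ιLm.elem) → G.gr.V,
          (∀ v hv (b : c.Li.gr.V), c.ιLm.fV b = v → fV0 v hv = t.m.fV (c.u.fV b)) ∧
          (∀ v hv, Sum.inl v = x → Sum.inl (fV0 v hv) = t.g.elem z) := by
      refine ⟨fun v hv => if h : ∃ b, c.ιLm.fV b = v then t.m.fV (c.u.fV h.choose)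
        else (hyV v (resolveV v hv h)).choose, ?_, ?_⟩
      · intro v hv b hb
        have hex : ∃ b', c.ιLm.fV b' = v := ⟨b, hb⟩
        beta_reduce
        rw [dif_pos hex]
        have : hex.choose = b := c.ιLm_inj.1 (hex.choose_spec.trans hb.symm)
        rw [this]
      · intro v hv hvx
        have hno : ¬∃ b, c.ιLm.fV b = v := by
          rintro ⟨b, hb⟩
          exact hxm ⟨Sum.inl b, by rw [THom.elem_inl, hb]; exact hvx⟩
        beta_reduce
        rw [dif_neg hno]
        exact (hyV v (resolveV v hv hno)).choose_spec.1
    obtain ⟨fE0, hfE0pos, hfE0neg⟩ :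
        ∃ fE0 : ∀ e : ρ.Lg.gr.E, Sum.inr e ∈ insert x (Set.range c.ιLm.elem) → G.gr.E,
          (∀ e he (b : c.Li.gr.E), c.ιLm.fE b = e → fE0 e he = t.m.fE (c.u.fE b)) ∧
          (∀ e he, Sum.inr e = x → Sum.inr (fE0 e he) = t.g.elem z) := by
      refine ⟨fun e he => if h : ∃ b, c.ιLm.fE b = e then t.m.fE (c.u.fE h.choose)
        else (hyE e (resolveE e he h)).choose, ?_, ?_⟩
      · intro e he b hb
        have hex : ∃ b', c.ιLm.fE b' = e := ⟨b, hb⟩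
        beta_reduce
        rw [dif_pos hex]
        have : hex.choose = b := c.ιLm_inj.2 (hex.choose_spec.trans hb.symm)
        rw [this]
      · intro e he hex0
        have hno : ¬∃ b, c.ιLm.fE b = e := by
          rintro ⟨b, hb⟩
          exact hxm ⟨Sum.inr b, by rw [THom.elem_inr, hb]; exact hex0⟩
        beta_reduce
        rw [dif_neg hno]
        exact (hyE e (resolveE e he hno)).choose_spec.1
    refine ⟨SubG ρ.Lg (insert x (Set.range c.ιLm.elem)) hcl,
      SubG.incl ρ.Lg (insert x (Set.range c.ιLm.elem)) hcl,
      ⟨⟨fun v => ⟨c.ιLm.fV v, Set.mem_insert_iff.mpr (Or.inr ⟨Sum.inl v, rfl⟩)⟩,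
        fun e => ⟨c.ιLm.fE e, Set.mem_insert_iff.mpr (Or.inr ⟨Sum.inr e, rfl⟩)⟩,
        fun e => Subtype.ext (c.ιLm.comm_src e),
        fun e => Subtype.ext (c.ιLm.comm_tar e)⟩,
        fun v => c.ιLm.typV v, fun e => c.ιLm.typE e⟩,
      ⟨⟨fun v => fV0 v.1 v.2, fun e => fE0 e.1 e.2, ?_, ?_⟩, ?_, ?_⟩,
      SubG.incl_inj _ _ _, THom.ext' rfl rfl, ?_, ?_, ?_, ?_⟩
    · -- comm_src of e1
      intro e
      show G.gr.src (fE0 e.1 e.2) = fV0 (ρ.Lg.gr.src e.1) ((hcl e.1 e.2).1)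
      by_cases h : ∃ b, c.ιLm.fE b = e.1
      · obtain ⟨b, hb⟩ := h
        have hsb : c.ιLm.fV (c.Li.gr.src b) = ρ.Lg.gr.src e.1 := by
          rw [← hb]; exact (c.ιLm.comm_src b).symm
        rw [hfE0pos e.1 e.2 b hb, hfV0pos (ρ.Lg.gr.src e.1) ((hcl e.1 e.2).1)
          (c.Li.gr.src b) hsb]
        have hms : G.gr.src (t.m.fE (c.u.fE b)) = t.m.fV (c.Lc.gr.src (c.u.fE b)) :=
          t.m.comm_src _
        have hus : c.Lc.gr.src (c.u.fE b) = c.u.fV (c.Li.gr.src b) := c.u.comm_src b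
        rw [hms, hus]
      · have hex : Sum.inr e.1 = x := resolveE e.1 e.2 h
        obtain ⟨hy1, hy2, ⟨ks, hks, hsrcy⟩, ⟨kt, hkt, htary⟩⟩ := (hyE e.1 hex).choose_spec
        have hfe : fE0 e.1 e.2 = (hyE e.1 hex).choose :=
          Sum.inr.inj ((hfE0neg e.1 e.2 hex).trans hy1.symm)
        rw [hfe, hsrcy, hfV0pos (ρ.Lg.gr.src e.1) ((hcl e.1 e.2).1) ks hks]
    · -- comm_tar of e1
      intro e
      show G.gr.tar (fE0 e.1 e.2) = fV0 (ρ.Lg.gr.tar e.1) ((hcl e.1 e.2).2)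
      by_cases h : ∃ b, c.ιLm.fE b = e.1
      · obtain ⟨b, hb⟩ := h
        have hsb : c.ιLm.fV (c.Li.gr.tar b) = ρ.Lg.gr.tar e.1 := by
          rw [← hb]; exact (c.ιLm.comm_tar b).symm
        rw [hfE0pos e.1 e.2 b hb, hfV0pos (ρ.Lg.gr.tar e.1) ((hcl e.1 e.2).2)
          (c.Li.gr.tar b) hsb]
        have hms : G.gr.tar (t.m.fE (c.u.fE b)) = t.m.fV (c.Lc.gr.tar (c.u.fE b)) :=
          t.m.comm_tar _
        have hus : c.Lc.gr.tar (c.u.fE b) = c.u.fV (c.Li.gr.tar b) := c.u.comm_tar b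
        rw [hms, hus]
      · have hex : Sum.inr e.1 = x := resolveE e.1 e.2 h
        obtain ⟨hy1, hy2, ⟨ks, hks, hsrcy⟩, ⟨kt, hkt, htary⟩⟩ := (hyE e.1 hex).choose_spec
        have hfe : fE0 e.1 e.2 = (hyE e.1 hex).choose :=
          Sum.inr.inj ((hfE0neg e.1 e.2 hex).trans hy1.symm)
        rw [hfe, htary, hfV0pos (ρ.Lg.gr.tar e.1) ((hcl e.1 e.2).2) kt hkt]
    · -- typV of e1
      intro v
      show G.typ.fV (fV0 v.1 v.2) = ρ.Lg.typ.fV v.1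
      by_cases h : ∃ b, c.ιLm.fV b = v.1
      · obtain ⟨b, hb⟩ := h
        rw [hfV0pos v.1 v.2 b hb]
        have h1 : G.typ.fV (t.m.fV (c.u.fV b)) = c.Lc.typ.fV (c.u.fV b) := t.m.typV _
        have h2 : c.Lc.typ.fV (c.u.fV b) = c.Li.typ.fV b := c.u.typV b
        have h3 : ρ.Lg.typ.fV (c.ιLm.fV b) = c.Li.typ.fV b := c.ιLm.typV b
        rw [h1, h2, ← h3, hb]
      · have hvx : Sum.inl v.1 = x := resolveV v.1 v.2 h
        have hfv : fV0 v.1 v.2 = (hyV v.1 hvx).choose :=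
          Sum.inl.inj ((hfV0neg v.1 v.2 hvx).trans (hyV v.1 hvx).choose_spec.1.symm)
        rw [hfv]
        exact (hyV v.1 hvx).choose_spec.2
    · -- typE of e1
      intro e
      show G.typ.fE (fE0 e.1 e.2) = ρ.Lg.typ.fE e.1
      by_cases h : ∃ b, c.ιLm.fE b = e.1
      · obtain ⟨b, hb⟩ := h
        rw [hfE0pos e.1 e.2 b hb]
        have h1 : G.typ.fE (t.m.fE (c.u.fE b)) = c.Lc.typ.fE (c.u.fE b) := t.m.typE _
        have h2 : c.Lc.typ.fE (c.u.fE b) = c.Li.typ.fE b := c.u.typE b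
        have h3 : ρ.Lg.typ.fE (c.ιLm.fE b) = c.Li.typ.fE b := c.ιLm.typE b
        rw [h1, h2, ← h3, hb]
      · have hex : Sum.inr e.1 = x := resolveE e.1 e.2 h
        have hfe : fE0 e.1 e.2 = (hyE e.1 hex).choose :=
          Sum.inr.inj ((hfE0neg e.1 e.2 hex).trans (hyE e.1 hex).choose_spec.1.symm)
        rw [hfe]
        exact (hyE e.1 hex).choose_spec.2.1
    · -- e1 ∘ j = m ∘ u
      exact THom.ext' (funext fun v => hfV0pos (c.ιLm.fV v) _ v rfl)
        (funext fun e => hfE0pos (c.ιLm.fE e) _ e rfl)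
    · -- x is mapped to the image of z
      rintro (v | e) hs
      · exact hfV0neg v.1 v.2 hs
      · exact hfE0neg e.1 e.2 hs
    · -- x has a preimage in Li2
      rcases hxdich with ⟨v, hv⟩ | ⟨e, he⟩
      · exact ⟨Sum.inl ⟨v, Set.mem_insert_iff.mpr (Or.inl hv.symm)⟩, hv.symm⟩
      · exact ⟨Sum.inr ⟨e, Set.mem_insert_iff.mpr (Or.inl he.symm)⟩, he.symm⟩
    · -- coverage of Li2
      rintro (v | e)
      · rcases Set.mem_insert_iff.mp v.2 with h | h
        · exact Or.inr h
        · obtain ⟨b, hb⟩ := THom.elem_inl_mem h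
          exact Or.inl ⟨Sum.inl b, congrArg Sum.inl (Subtype.ext hb)⟩
      · rcases Set.mem_insert_iff.mp e.2 with h | h
        · exact Or.inr h
        · obtain ⟨b, hb⟩ := THom.elem_inr_mem h
          exact Or.inl ⟨Sum.inr b, congrArg Sum.inr (Subtype.ext hb)⟩
  -- derived properties
  have hj_inj : j.Injective := THom.inj_of_comp (g := incl2)
    (by rw [hj_incl]; exact c.ιLm_inj)
  have hj_nb : ¬j.Bijective := by
    rintro ⟨hbV, hbE⟩
    obtain ⟨s0, hs0⟩ := hsx
    have hjsurj : ∀ s, ∃ b, j.elem b = s := by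
      rintro (v | e)
      · obtain ⟨b, hb⟩ := hbV.2 v
        exact ⟨Sum.inl b, by rw [THom.elem_inl, hb]⟩
      · obtain ⟨b, hb⟩ := hbE.2 e
        exact ⟨Sum.inr b, by rw [THom.elem_inr, hb]⟩
    obtain ⟨b, hb⟩ := hjsurj s0
    apply hxm
    refine ⟨b, ?_⟩
    rw [← hj_incl, THom.elem_comp, hb, hs0]
  have hmu_inj : Function.Injective (t.m.comp c.u).elem :=
    THom.inj_elem.mp (THom.Injective.comp t.m_inj c.u_inj)
  have hincl2_elem_inj : Function.Injective incl2.elem := THom.inj_elem.mp hincl2_inj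
  have he1_inj : e1.Injective := by
    rw [THom.inj_elem]
    intro s s' hss
    have hje : ∀ b, e1.elem (j.elem b) = (t.m.comp c.u).elem b := fun b => by
      rw [← THom.elem_comp, he1j]
    rcases hcover s with ⟨b, rfl⟩ | hxs <;> rcases hcover s' with ⟨b', rfl⟩ | hxs'
    · rw [hje b, hje b'] at hss
      rw [hmu_inj hss]
    · rw [hje b, he1x s' hxs'] at hss
      exact absurd ((THom.elem_comp t.m c.u b) ▸ hss) (hym (c.u.elem b))
    · rw [hje b', he1x s hxs] at hss
      exact absurd ((THom.elem_comp t.m c.u b') ▸ hss.symm) (hym (c.u.elem b'))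
    · exact hincl2_elem_inj (hxs.trans hxs'.symm)
  -- the pushout Lc2 of the larger factorisation and the induced morphism w
  have hcoc : e1.comp ((j.comp c.ιLi).comp ρ.lb) = (t.m.comp c.lc).comp c.ιKm := by
    have h1 : e1.comp ((j.comp c.ιLi).comp ρ.lb) = ((e1.comp j).comp c.ιLi).comp ρ.lb :=
      THom.ext' rfl rfl
    have h2 : ((t.m.comp c.u).comp c.ιLi).comp ρ.lb =
        t.m.comp (c.u.comp (c.ιLi.comp ρ.lb)) := THom.ext' rfl rfl
    have h3 : t.m.comp (c.lc.comp c.ιKm) = (t.m.comp c.lc).comp c.ιKm := THom.ext' rfl rfl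
    rw [h1, he1j, h2, c.po.1, h3]
  have hpo2' := CPO.isPO ((j.comp c.ιLi).comp ρ.lb) c.ιKm c.ιKm_inj
  obtain ⟨w, ⟨hw1, hw2⟩, -⟩ := hpo2'.2 G e1 (t.m.comp c.lc) hcoc
  have hw_inj : w.Injective := by
    rw [THom.inj_elem]
    intro s s' hss
    have hwu : ∀ a, w.elem ((CPO.qa ((j.comp c.ιLi).comp ρ.lb) c.ιKm).elem a) = e1.elem a :=
      fun a => by rw [← THom.elem_comp, hw1]
    have hwl : ∀ k, w.elem ((CPO.qb ((j.comp c.ιLi).comp ρ.lb) c.ιKm c.ιKm_inj).elem k) =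
        (t.m.comp c.lc).elem k := fun k => by rw [← THom.elem_comp, hw2]
    have hml_inj : Function.Injective (t.m.comp c.lc).elem :=
      THom.inj_elem.mp (THom.Injective.comp t.m_inj c.lc_inj)
    have hmix : ∀ a k, e1.elem a = (t.m.comp c.lc).elem k →
        (CPO.qa ((j.comp c.ιLi).comp ρ.lb) c.ιKm).elem a =
          (CPO.qb ((j.comp c.ιLi).comp ρ.lb) c.ιKm c.ιKm_inj).elem k := by
      intro a k hak
      rcases hcover a with ⟨b, rfl⟩ | hxa
      · have h1 : e1.elem (j.elem b) = t.m.elem (c.u.elem b) := by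
          rw [← THom.elem_comp, he1j]
          exact THom.elem_comp _ _ _
        have h2 : (t.m.comp c.lc).elem k = t.m.elem (c.lc.elem k) := THom.elem_comp _ _ _
        rw [h1, h2] at hak
        have h3 : c.u.elem b = c.lc.elem k := THom.inj_elem.mp t.m_inj hak
        obtain ⟨p, hp1, hp2⟩ := IsPO.pb_elem c.ιKm_inj c.po b k h3
        rw [hp1, hp2]
        have h4 : j.elem ((c.ιLi.comp ρ.lb).elem p) =
            ((j.comp c.ιLi).comp ρ.lb).elem p := by
          rw [THom.elem_comp, THom.elem_comp, THom.elem_comp]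
        rw [h4]
        calc (CPO.qa ((j.comp c.ιLi).comp ρ.lb) c.ιKm).elem
              (((j.comp c.ιLi).comp ρ.lb).elem p)
            = ((CPO.qa ((j.comp c.ιLi).comp ρ.lb) c.ιKm).comp
                ((j.comp c.ιLi).comp ρ.lb)).elem p := (THom.elem_comp _ _ _).symm
          _ = ((CPO.qb ((j.comp c.ιLi).comp ρ.lb) c.ιKm c.ιKm_inj).comp c.ιKm).elem p :=
              THom.congr_elem hpo2'.1 p
          _ = (CPO.qb ((j.comp c.ιLi).comp ρ.lb) c.ιKm c.ιKm_inj).elem (c.ιKm.elem p) :=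
              THom.elem_comp _ _ _
      · exfalso
        rw [he1x a hxa] at hak
        exact hym (c.lc.elem k) (hak.trans (THom.elem_comp _ _ _)).symm
    rcases CPO.cover ((j.comp c.ιLi).comp ρ.lb) c.ιKm c.ιKm_inj s with ⟨a, rfl⟩ | ⟨k, rfl⟩ <;>
      rcases CPO.cover ((j.comp c.ιLi).comp ρ.lb) c.ιKm c.ιKm_inj s' with ⟨a', rfl⟩ | ⟨k', rfl⟩
    · rw [hwu a, hwu a'] at hss
      rw [THom.inj_elem.mp he1_inj hss]
    · rw [hwu a, hwl k'] at hss
      exact hmix a k' hss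
    · rw [hwl k, hwu a'] at hss
      exact (hmix a' k hss.symm).symm
    · rw [hwl k, hwl k'] at hss
      rw [hml_inj hss]
  -- contradiction with local completeness
  have hfact : incl2.comp (j.comp c.ιLi) = ρ.ιL := by
    have h1 : incl2.comp (j.comp c.ιLi) = (incl2.comp j).comp c.ιLi := THom.ext' rfl rfl
    rw [h1, hj_incl, c.factL]
  have he1iLi : e1.comp (j.comp c.ιLi) = t.m.comp c.ιLc := by
    have h1 : e1.comp (j.comp c.ιLi) = (e1.comp j).comp c.ιLi := THom.ext' rfl rfl
    have h2 : (t.m.comp c.u).comp c.ιLi = t.m.comp c.ιLc := THom.ext' rfl rfl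
    rw [h1, he1j, h2]
  exact hlc.1 Li2 (j.comp c.ιLi) incl2 j
    (THom.Injective.comp hj_inj c.ιLi_inj) hincl2_inj hfact hj_inj hj_nb rfl hj_incl
    e1 he1_inj he1iLi
    (CPO.C ((j.comp c.ιLi).comp ρ.lb) c.ιKm)
    (CPO.qa ((j.comp c.ιLi).comp ρ.lb) c.ιKm)
    (CPO.qb ((j.comp c.ιLi).comp ρ.lb) c.ιKm c.ιKm_inj) hpo2'
    w hw1 hw2 hw_inj
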